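/- Let G be connected with modulator to cluster graph U and let P be a shortest path in G containing a vertex of U. Define L = V(P) ∩ U, R_i = {u ∈ U : d_G(u, V(P)) = i} for i ∈ {1,2}, and δ(u) = min{d_G(u,L), d_G(u,R_1)+1, d_G(u,R_2)+2}. Then for every u ∈ U, δ(u) = d_G(u, V(P)). -/

import Mathlib

open SimpleGraph

/-- `U` is a modulator to cluster graph: every connected component of `G - U` is a clique. -/
def IsClusterModulator {V : Type*} (G : SimpleGraph V) (U : Set V) : Prop :=
  ∀ u v : ↥Uᶜ, (G.induce Uᶜ).Reachable u v → u ≠ v → (G.induce Uᶜ).Adj u v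

/-- distance from a vertex to a set of vertices -/
noncomputable def dset {V : Type*} (G : SimpleGraph V) (u : V) (S : Set V) : ℕ∞ :=
  ⨅ s ∈ S, G.edist u s

/-- eccentricity of a set of vertices -/
noncomputable def eccSet {V : Type*} (G : SimpleGraph V) (S : Set V) : ℕ∞ :=
  ⨆ u, dset G u S

section Helpers

variable {V : Type*} {G : SimpleGraph V} {U S : Set V}

lemma dset_le_edist {u s : V} (hs : s ∈ S) : dset G u S ≤ G.edist u s :=
  biInf_le _ hs

lemma dset_exists {u : V} (hS : S.Nonempty) : ∃ s ∈ S, G.edist u s = dset G u S := by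
  have h1 : dset G u S = sInf ((G.edist u) '' S) := by
    rw [dset, sInf_image]
  have h2 : ((G.edist u) '' S).Nonempty := hS.image _
  have := csInf_mem h2
  rw [← h1] at this
  obtain ⟨s, hsS, hse⟩ := this
  exact ⟨s, hsS, hse⟩

lemma dset_triangle {u w : V} (hS : S.Nonempty) :
    dset G u S ≤ G.edist u w + dset G w S := by
  obtain ⟨t, htS, hte⟩ := dset_exists (G := G) (u := w) hS
  calc dset G u S ≤ G.edist u t := dset_le_edist htS
    _ ≤ G.edist u w + G.edist w t := SimpleGraph.edist_triangle
    _ = G.edist u w + dset G w S := by rw [hte]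

/-- a walk avoiding `U` gives reachability in the induced graph on `Uᶜ`. -/
lemma reachable_induce_compl {x s : V} (Q : G.Walk x s) (h : ∀ v ∈ Q.support, v ∉ U) :
    (G.induce Uᶜ).Reachable ⟨x, h x Q.start_mem_support⟩ ⟨s, h s Q.end_mem_support⟩ := by
  induction Q with
  | nil => exact Reachable.refl _
  | @cons a c d hadj Q' ih =>
    have hc : c ∈ (Uᶜ : Set V) := h c (by simp)
    have ih' := ih (fun v hv => h v (by simp [hv]))
    have hadj' : (G.induce Uᶜ).Adj ⟨a, h a (by simp)⟩ ⟨c, hc⟩ := by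
      simpa using hadj
    exact hadj'.reachable.trans ih'

/-- a walk whose tail avoids `U` has endpoints at `edist ≤ 2`. -/
lemma edist_le_two_of_tail (hU : IsClusterModulator G U) {w s : V} (Q : G.Walk w s)
    (h : ∀ x ∈ Q.support.tail, x ∉ U) : G.edist w s ≤ 2 := by
  cases Q with
  | nil => simp
  | @cons w x s hadj Q' =>
    have htail : ∀ v ∈ Q'.support, v ∉ U := by
      intro v hv; exact h v (by simp [hv])
    have hx : x ∉ U := htail x Q'.start_mem_support
    have hs : s ∉ U := htail s Q'.end_mem_support
    have hreach := reachable_induce_compl Q' htail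
    have hwx : G.edist w x ≤ 1 := by
      simpa using SimpleGraph.edist_le hadj.toWalk
    by_cases hxs : x = s
    · subst hxs
      calc G.edist w x ≤ 1 := hwx
        _ ≤ 2 := by norm_num
    · have hne : (⟨x, hx⟩ : ↥(Uᶜ : Set V)) ≠ ⟨s, hs⟩ := by
        simp [Subtype.ext_iff, hxs]
      have hadj2 := hU _ _ hreach hne
      have hxs' : G.Adj x s := by simpa using hadj2
      have hxs2 : G.edist x s ≤ 1 := by
        simpa using SimpleGraph.edist_le hxs'.toWalk
      calc G.edist w s ≤ G.edist w x + G.edist x s := SimpleGraph.edist_triangle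
        _ ≤ 1 + 1 := add_le_add hwx hxs2
        _ = 2 := by norm_num

/-- last-`U`-vertex decomposition of a walk starting in `U`. -/
lemma lastU [DecidableEq V] (n : ℕ) : ∀ {u s : V} (Q : G.Walk u s), Q.length ≤ n → u ∈ U →
    ∃ w ∈ U, ∃ (Q1 : G.Walk u w) (Q2 : G.Walk w s),
      Q1.length + Q2.length ≤ Q.length ∧ ∀ x ∈ Q2.support.tail, x ∉ U := by
  induction n with
  | zero =>
    intro u s Q hlen hu
    cases Q with
    | nil => exact ⟨u, hu, Walk.nil, Walk.nil, by simp, by simp⟩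
    | cons h Q' => simp [Walk.length_cons] at hlen
  | succ n ih =>
    intro u s Q hlen hu
    cases Q with
    | nil => exact ⟨u, hu, Walk.nil, Walk.nil, by simp, by simp⟩
    | @cons u x s hadj Q' =>
      by_cases hex : ∃ y ∈ Q'.support, y ∈ U
      · obtain ⟨y, hy, hyU⟩ := hex
        have hD : (Q'.dropUntil y hy).length ≤ n := by
          have h1 := Q'.length_dropUntil_le hy
          have h2 : Q'.length ≤ n := by
            simpa [Walk.length_cons, Nat.succ_le_succ_iff] using hlen
          omega
        obtain ⟨w, hwU, R1, R2, hR, hRt⟩ := ih (Q'.dropUntil y hy) hD hyU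
        refine ⟨w, hwU, (Walk.cons hadj (Q'.takeUntil y hy)).append R1, R2, ?_, hRt⟩
        have hsum : (Q'.takeUntil y hy).length + (Q'.dropUntil y hy).length = Q'.length := by
          have h := congrArg Walk.length (Q'.take_spec hy)
          rwa [Walk.length_append] at h
        simp only [Walk.length_append, Walk.length_cons]
        omega
      · push_neg at hex
        exact ⟨u, hu, Walk.nil, Walk.cons hadj Q', by simp,
          by simpa using hex⟩

end Helpers

/-- With `L = V(P) ∩ U`, `Rᵢ = {u ∈ U : d_G(u, V(P)) = i}` and
`δ(u) = min {d(u,L), d(u,R₁)+1, d(u,R₂)+2}`, for every `u ∈ U` we have `δ(u) = d_G(u, V(P))`. -/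
theorem stmt7 {V : Type*} [Fintype V] (G : SimpleGraph V) (hG : G.Connected)
    (U : Set V) (hU : IsClusterModulator G U)
    {a b : V} (P : G.Walk a b) (hP : P.IsPath) (hs : P.length = G.dist a b)
    (hPU : ∃ u ∈ U, u ∈ P.support) :
    ∀ u ∈ U,
      min (dset G u ({x | x ∈ P.support} ∩ U))
        (min (dset G u {w | w ∈ U ∧ dset G w {x | x ∈ P.support} = 1} + 1)
             (dset G u {w | w ∈ U ∧ dset G w {x | x ∈ P.support} = 2} + 2))
      = dset G u {x | x ∈ P.support} := by
  intro u hu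
  set S : Set V := {x | x ∈ P.support} with hS
  have hSne : S.Nonempty := ⟨a, P.start_mem_support⟩
  set R1 : Set V := {w | w ∈ U ∧ dset G w S = 1} with hR1
  set R2 : Set V := {w | w ∈ U ∧ dset G w S = 2} with hR2
  apply le_antisymm
  · -- δ(u) ≤ d(u, S): find a witness from a shortest walk
    obtain ⟨s, hsS, hse⟩ := dset_exists (G := G) (u := u) hSne
    obtain ⟨Q, hQ⟩ := (hG u s).exists_walk_length_eq_edist
    classical
    obtain ⟨w, hwU, Q1, Q2, hlen, htail⟩ := lastU Q.length Q le_rfl hu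
    have hews : G.edist w s ≤ 2 := edist_le_two_of_tail hU Q2 htail
    have hj2 : dset G w S ≤ 2 := le_trans (dset_le_edist hsS) hews
    have hjQ2 : dset G w S ≤ Q2.length :=
      le_trans (dset_le_edist hsS) (SimpleGraph.edist_le Q2)
    have heuw : G.edist u w ≤ Q1.length := SimpleGraph.edist_le Q1
    have hQd : (Q.length : ℕ∞) = dset G u S := hQ.trans hse
    have hkey : G.edist u w + dset G w S ≤ dset G u S := by
      calc G.edist u w + dset G w S ≤ (Q1.length : ℕ∞) + Q2.length :=
            add_le_add heuw hjQ2
        _ = ((Q1.length + Q2.length : ℕ) : ℕ∞) := by push_cast; ring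
        _ ≤ (Q.length : ℕ∞) := by exact_mod_cast hlen
        _ = dset G u S := hQd
    have hjne : dset G w S ≠ ⊤ := by
      intro h; rw [h] at hj2; simp at hj2
    lift dset G w S to ℕ using hjne with j hjdef
    have hj2' : j ≤ 2 := by exact_mod_cast hj2
    interval_cases j
    · -- w ∈ S ∩ U
      have hwS : w ∈ S := by
        obtain ⟨t, htS, hte⟩ := dset_exists (G := G) (u := w) hSne
        have h0 : G.edist w t = 0 := by rw [hte, ← hjdef]; norm_num
        have : w = t := SimpleGraph.edist_eq_zero_iff.mp h0
        rwa [this]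
      have h1 : dset G u (S ∩ U) ≤ G.edist u w := dset_le_edist ⟨hwS, hwU⟩
      refine le_trans (min_le_left _ _) (le_trans h1 ?_)
      simpa using hkey
    · -- w ∈ R1
      have hwR1 : w ∈ R1 := ⟨hwU, by rw [← hjdef]; norm_num⟩
      have h1 : dset G u R1 ≤ G.edist u w := dset_le_edist hwR1
      refine le_trans (min_le_right _ _) (le_trans (min_le_left _ _) ?_)
      calc dset G u R1 + 1 ≤ G.edist u w + 1 := add_le_add h1 le_rfl
        _ ≤ dset G u S := by simpa using hkey
    · -- w ∈ R2
      have hwR2 : w ∈ R2 := ⟨hwU, by rw [← hjdef]; norm_num⟩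
      have h1 : dset G u R2 ≤ G.edist u w := dset_le_edist hwR2
      refine le_trans (min_le_right _ _) (le_trans (min_le_right _ _) ?_)
      calc dset G u R2 + 2 ≤ G.edist u w + 2 := add_le_add h1 le_rfl
        _ ≤ dset G u S := by simpa using hkey
  · -- d(u, S) ≤ δ(u)
    refine le_min ?_ (le_min ?_ ?_)
    · exact iInf_le_iInf_of_subset Set.inter_subset_left
    · rcases R1.eq_empty_or_nonempty with h | h
      · simp [dset, h]
      · obtain ⟨w, hwR, hwe⟩ := dset_exists (G := G) (u := u) h
        calc dset G u S ≤ G.edist u w + dset G w S := dset_triangle hSne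
          _ = dset G u R1 + 1 := by rw [hwe, hwR.2]
    · rcases R2.eq_empty_or_nonempty with h | h
      · simp [dset, h]
      · obtain ⟨w, hwR, hwe⟩ := dset_exists (G := G) (u := u) h
        calc dset G u S ≤ G.edist u w + dset G w S := dset_triangle hSne
          _ = dset G u R2 + 2 := by rw [hwe, hwR.2]
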